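/- There exist λ > 1, a > 0 and q ∈ ℕ with 4^{−q} < 1/8 such that, defining d'((ω₁,x₁),(ω₂,x₂)) = a·|x₁ − x₂| + d_{S¹}(ω₁,ω₂), the following holds: for every n ≥ 1, every s ∈ {0, …, 4^{q+n} − 1} and all points (ω₁,x₁), (ω₂,x₂) with ω_i in the arc [s/4^{q+n}, (s+1)/4^{q+n}] of S¹ and x_i ∈ J_n(ω_i) (i = 1, 2), one has d'(T^n(ω₁,x₁), T^n(ω₂,x₂)) ≥ λ·d'((ω₁,x₁),(ω₂,x₂)). -/

import Mathlib

open MeasureTheory Real Filter Topology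
open scoped NNReal ENNReal

noncomputable section

/-- The circle `S¹ = ℝ/ℤ`. -/
abbrev S1 : Type := UnitAddCircle

/-- The map `F(ω) = 4ω` on the circle. -/
noncomputable def Fm : S1 → S1 := fun ω => (4 : ℕ) • ω

/-- The one-dimensional maps `T_a(x) = x(1 + 2^a x^a) = x(1 + (2x)^a)` for `x ≤ 1/2`,
`2x - 1` for `x > 1/2`. -/
noncomputable def Ta (a x : ℝ) : ℝ := if x ≤ 1 / 2 then x * (1 + (2 * x) ^ a) else 2 * x - 1

/-- The skew product `T(ω, x) = (F ω, T_{α(ω)}(x))`. -/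
noncomputable def Tskew (α : S1 → ℝ) : S1 × ℝ → S1 × ℝ :=
  fun p => (Fm p.1, Ta (α p.1) p.2)

/-- The reference measure: Haar probability on `S¹` times Lebesgue measure on `[0,1]`. -/
noncomputable def Leb : Measure (S1 × ℝ) :=
  (volume : Measure S1).prod (volume.restrict (Set.Icc (0:ℝ) 1))

/-! ### Auxiliary lemmas -/

lemma Ta_left {a x : ℝ} (h : x ≤ 1/2) : Ta a x = x * (1 + (2*x)^a) := if_pos h

lemma Ta_right {a x : ℝ} (h : ¬ x ≤ 1/2) : Ta a x = 2*x - 1 := if_neg h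

lemma Ta_mono {a u v : ℝ} (ha : 0 ≤ a) (hv : 0 ≤ v) (hvu : v ≤ u) (hu : u ≤ 1/2) :
    Ta a v ≤ Ta a u ∧ u - v ≤ Ta a u - Ta a v := by
  rw [Ta_left hu, Ta_left (le_trans hvu hu)]
  have h1 : v * (2*v)^a ≤ u * (2*u)^a :=
    mul_le_mul hvu (Real.rpow_le_rpow (by linarith) (by linarith) ha)
      (Real.rpow_nonneg (by linarith) a) (le_trans hv hvu)
  constructor
  · nlinarith [h1]
  · nlinarith [h1]

lemma Ta_param_aux {a b v : ℝ} (hb : 0 < b) (hba : b ≤ a) (hv0 : 0 ≤ v) (hv : v ≤ 1/2) :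
    0 ≤ Ta b v - Ta a v ∧ Ta b v - Ta a v ≤ a - b := by
  have ha : 0 < a := lt_of_lt_of_le hb hba
  rw [Ta_left hv, Ta_left hv]
  rcases eq_or_lt_of_le hv0 with h | h
  · rw [← h]
    norm_num [Real.zero_rpow ha.ne', Real.zero_rpow hb.ne']
    linarith
  · set t : ℝ := 2*v with htdef
    have ht0 : 0 < t := by simp only [htdef]; linarith
    have ht1 : t ≤ 1 := by simp only [htdef]; linarith
    have hmono : t^a ≤ t^b := Real.rpow_le_rpow_of_exponent_ge ht0 ht1 hba
    have hb1 : t^b ≤ 1 := Real.rpow_le_one ht0.le ht1 hb.le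
    have hab1 : t^(a-b) ≤ 1 := Real.rpow_le_one ht0.le ht1 (by linarith)
    have hbpos : 0 < t^b := Real.rpow_pos_of_pos ht0 b
    have h2 : (1:ℝ) - t^(a-b) ≤ (a-b) * (-Real.log t) := by
      have h := Real.add_one_le_exp (Real.log t * (a-b))
      rw [← Real.rpow_def_of_pos ht0] at h
      nlinarith [h]
    have h3 : t * (-Real.log t) ≤ 1 := by
      have h := Real.log_le_sub_one_of_pos (show (0:ℝ) < 1/t by positivity)
      rw [one_div, Real.log_inv] at h
      have h' := mul_le_mul_of_nonneg_left h ht0.le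
      have hinv : t * t⁻¹ = 1 := mul_inv_cancel₀ ht0.ne'
      nlinarith [h']
    have h4 : t^b * t^(a-b) = t^a := by
      rw [← Real.rpow_add ht0]; ring_nf
    have hlog : 0 ≤ -Real.log t := by
      have := Real.log_nonpos ht0.le ht1
      linarith
    constructor
    · nlinarith [hmono]
    · -- v*(t^b - t^a) ≤ a - b
      have key : v * (t^b - t^a) ≤ a - b := by
        have e1 : t^b - t^a = t^b * (1 - t^(a-b)) := by rw [mul_sub, mul_one, h4]
        have e2 : t^b * (1 - t^(a-b)) ≤ 1 - t^(a-b) := by nlinarith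
        have e3 : v * (t^b - t^a) ≤ v * ((a-b) * (-Real.log t)) := by
          rw [e1]
          have : t^b * (1 - t^(a-b)) ≤ (a-b) * (-Real.log t) := le_trans e2 h2
          nlinarith [this]
        have e4 : v * ((a-b) * (-Real.log t)) ≤ (a-b) / 2 := by
          have : v = t/2 := by simp only [htdef]; ring
          rw [this]
          nlinarith [h3, mul_le_mul_of_nonneg_left h3 (show (0:ℝ) ≤ a - b by linarith)]
        linarith
      nlinarith [key]

lemma Ta_param {a b v : ℝ} (ha : 0 < a) (hb : 0 < b) (hv0 : 0 ≤ v) (hv : v ≤ 1/2) :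
    |Ta a v - Ta b v| ≤ |a - b| := by
  rcases le_total b a with h | h
  · obtain ⟨h1, h2⟩ := Ta_param_aux hb h hv0 hv
    rw [abs_of_nonneg (by linarith : (0:ℝ) ≤ a - b)]
    rw [abs_le]; constructor <;> linarith
  · obtain ⟨h1, h2⟩ := Ta_param_aux ha h hv0 hv
    rw [abs_of_nonpos (by linarith : a - b ≤ 0)]
    rw [abs_le]; constructor <;> linarith

lemma Ta_step {a b u v : ℝ} (ha : 0 < a) (hb : 0 < b)
    (hu : u ∈ Set.Icc (0:ℝ) (1/2)) (hv : v ∈ Set.Icc (0:ℝ) (1/2)) :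
    |u - v| - |a - b| ≤ |Ta a u - Ta b v| := by
  have h1 : |u - v| ≤ |Ta a u - Ta a v| := by
    rcases le_total v u with h | h
    · have := Ta_mono ha.le hv.1 h hu.2
      rw [abs_of_nonneg (by linarith), abs_of_nonneg (by linarith)]
      linarith [this.2]
    · have := Ta_mono ha.le hu.1 h hv.2
      rw [abs_of_nonpos (by linarith), abs_of_nonpos (by linarith)]
      linarith [this.2]
  have h2 : |Ta a v - Ta b v| ≤ |a - b| := Ta_param ha hb hv.1 hv.2
  have h3 : |Ta a u - Ta a v| ≤ |Ta a u - Ta b v| + |Ta b v - Ta a v| := abs_sub_le _ _ _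
  rw [abs_sub_comm (Ta b v) (Ta a v)] at h3
  linarith

lemma coe4 (u : ℝ) : Fm (u : S1) = ((4*u : ℝ) : S1) := by
  show (4:ℕ) • ((u:ℝ) : S1) = _
  rw [← AddCircle.coe_nsmul]
  congr 1
  simp [nsmul_eq_mul]

lemma Fm_iter (k : ℕ) (u : ℝ) : Fm^[k] (u : S1) = ((4^k*u : ℝ) : S1) := by
  induction k with
  | zero => norm_num
  | succ k ih =>
    rw [Function.iterate_succ_apply', ih, coe4]
    congr 1
    ring

lemma Tskew_iter_fst (α : S1 → ℝ) (k : ℕ) (ω : S1) (x : ℝ) :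
    ((Tskew α)^[k] (ω, x)).1 = Fm^[k] ω := by
  induction k with
  | zero => rfl
  | succ k ih =>
    rw [Function.iterate_succ_apply', Function.iterate_succ_apply']
    show Fm ((Tskew α)^[k] (ω, x)).1 = _
    rw [ih]

lemma Tskew_iter_snd (α : S1 → ℝ) (k : ℕ) (ω : S1) (x : ℝ) :
    ((Tskew α)^[k+1] (ω, x)).2 =
      Ta (α (((Tskew α)^[k] (ω, x)).1)) (((Tskew α)^[k] (ω, x)).2) := by
  rw [Function.iterate_succ_apply']
  rfl

lemma dist_coe_S1 (u v : ℝ) (h : |u - v| ≤ 1/2) : dist (u : S1) (v : S1) = |u - v| := by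
  rw [dist_eq_norm, ← AddCircle.coe_sub]
  refine (AddCircle.norm_coe_eq_abs_iff (p := (1:ℝ)) one_ne_zero).mpr ?_
  simpa using h

set_option maxHeartbeats 1600000 in
/-- Expansion of the induced map: there are `λ > 1`, `a > 0` and `q` with `4^{-q} < 1/8` such
that `T^n` expands the metric `d'((ω₁,x₁),(ω₂,x₂)) = a|x₁-x₂| + d(ω₁,ω₂)` by at least `λ` on
each set `A_{s,n} = [s/4^{q+n}, (s+1)/4^{q+n}] × J_n`. -/
theorem stmt8
    (α : S1 → ℝ) (αl : ℝ → ℝ)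
    (hαl : ContDiff ℝ 2 αl) (hlift : ∀ t : ℝ, α (t : S1) = αl t)
    (x₀ : S1) (t₀ : ℝ) (ht₀ : (t₀ : S1) = x₀)
    (αmin αmax : ℝ)
    (hmin : ∀ ω, αmin ≤ α ω) (hx₀ : α x₀ = αmin)
    (huniq : ∀ ω, α ω = αmin → ω = x₀)
    (hmax : ∀ ω, α ω ≤ αmax) (hmax_att : ∃ ω, α ω = αmax)
    (h0 : 0 < αmin) (h01 : αmin < αmax) (h1 : αmax < 1) (h32 : αmax < 3 / 2 * αmin)
    (h2nd : 0 < iteratedDeriv 2 αl t₀)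
    (X : ℕ → S1 → ℝ)
    (hX0 : ∀ ω, X 0 ω = 1) (hX1 : ∀ ω, X 1 ω = 1 / 2)
    (hXmem : ∀ n, 1 ≤ n → ∀ ω, X (n + 1) ω ∈ Set.Icc (0:ℝ) (1 / 2))
    (hXrec : ∀ n, 1 ≤ n → ∀ ω, Ta (α ω) (X (n + 1) ω) = X n (Fm ω))
 :
    ∃ lam : ℝ, 1 < lam ∧ ∃ a : ℝ, 0 < a ∧ ∃ q : ℕ, ((1:ℝ) / 4) ^ q < 1 / 8 ∧
      ∀ n : ℕ, 1 ≤ n → ∀ s : ℕ, s < 4 ^ (q + n) →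
      ∀ t₁ t₂ x₁ x₂ : ℝ,
        t₁ ∈ Set.Icc ((s : ℝ) / 4 ^ (q + n)) (((s : ℝ) + 1) / 4 ^ (q + n)) →
        t₂ ∈ Set.Icc ((s : ℝ) / 4 ^ (q + n)) (((s : ℝ) + 1) / 4 ^ (q + n)) →
        x₁ ∈ Set.Icc ((1 + X n (Fm (t₁ : S1))) / 2) ((1 + X (n - 1) (Fm (t₁ : S1))) / 2) →
        x₂ ∈ Set.Icc ((1 + X n (Fm (t₂ : S1))) / 2) ((1 + X (n - 1) (Fm (t₂ : S1))) / 2) →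
        lam * (a * |x₁ - x₂| + dist (t₁ : S1) (t₂ : S1)) ≤
          a * |((Tskew α)^[n] ((t₁ : S1), x₁)).2 - ((Tskew α)^[n] ((t₂ : S1), x₂)).2| +
            dist ((Tskew α)^[n] ((t₁ : S1), x₁)).1 ((Tskew α)^[n] ((t₂ : S1), x₂)).1 := by
  classical
  -- positivity of α
  have hαpos : ∀ ω, 0 < α ω := fun ω => h0.trans_le (hmin ω)
  -- Lipschitz constant for α
  have hdiff : Differentiable ℝ αl := hαl.differentiable (by norm_num)
  have hper : ∀ t : ℝ, αl (t + 1) = αl t := by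
    intro t
    rw [← hlift, ← hlift]
    congr 1
    exact AddCircle.coe_add_period 1 t
  have hderper : Function.Periodic (deriv αl) 1 := by
    intro t
    have h1 : (fun s : ℝ => αl (s + 1)) = αl := funext hper
    calc deriv αl (t + 1) = deriv (fun s => αl (s + 1)) t := by
          rw [deriv_comp_add_const]
      _ = deriv αl t := by rw [h1]
  have hcd : Continuous (deriv αl) := hαl.continuous_deriv (by norm_num)
  obtain ⟨z, _, hz⟩ := isCompact_Icc.exists_isMaxOn (α := ℝ)
    (⟨0, by norm_num⟩ : (Set.Icc (0:ℝ) 1).Nonempty)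
    ((continuous_abs.comp hcd).continuousOn : ContinuousOn (fun t => |deriv αl t|) _)
  set L : ℝ := |deriv αl z| with hLdef
  have hL0 : 0 ≤ L := abs_nonneg _
  have hLb : ∀ t : ℝ, |deriv αl t| ≤ L := by
    intro t
    have hfr : deriv αl t = deriv αl (Int.fract t) := by
      have := hderper.sub_int_mul_eq (x := t) ⌊t⌋
      rw [mul_one] at this
      exact this.symm
    rw [hfr]
    exact hz ⟨Int.fract_nonneg t, (Int.fract_lt_one t).le⟩
  have hlip : ∀ u v : ℝ, |αl u - αl v| ≤ L * |u - v| := by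
    intro u v
    have := Convex.norm_image_sub_le_of_norm_deriv_le (s := Set.univ)
      (fun x _ => (hdiff x)) (fun x _ => by simpa using hLb x)
      convex_univ (Set.mem_univ v) (Set.mem_univ u)
    simpa [Real.norm_eq_abs] using this
  have hαcoe : ∀ u v : ℝ, |α (u : S1) - α (v : S1)| ≤ L * |u - v| := by
    intro u v; rw [hlift, hlift]; exact hlip u v
  -- X facts
  have hXIcc : ∀ m, 1 ≤ m → ∀ ω, X m ω ∈ Set.Icc (0:ℝ) (1/2) := by
    intro m hm ω
    match m, hm with
    | 1, _ => rw [hX1]; constructor <;> norm_num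
    | (k+2), _ => exact hXmem (k+1) (by omega) ω
  have hXpos : ∀ m, 1 ≤ m → ∀ ω, 0 < X m ω := by
    intro m
    induction m with
    | zero => omega
    | succ k ih =>
      intro _ ω
      rcases Nat.eq_zero_or_pos k with hk | hk
      · subst hk; rw [hX1]; norm_num
      · have h1 := hXrec k hk ω
        have h2 := (hXIcc (k+1) (by omega) ω).1
        rcases eq_or_lt_of_le h2 with h | h
        · exfalso
          have hz0 : Ta (α ω) (X (k+1) ω) = 0 := by
            rw [← h, Ta_left (by norm_num : (0:ℝ) ≤ 1/2)]
            ring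
          rw [h1] at hz0
          exact absurd hz0 (ih hk (Fm ω)).ne'
        · exact h
  refine ⟨2, by norm_num, 1/(1+L), by positivity, 2, by norm_num, ?_⟩
  intro n hn s hs t₁ t₂ x₁ x₂ ht₁ ht₂ hx₁ hx₂
  set a : ℝ := 1/(1+L) with hadef
  have ha0 : 0 < a := by positivity
  have hP : (0:ℝ) < 4^(2+n) := by positivity
  have hsplit : ((s:ℝ)+1)/4^(2+n) = (s:ℝ)/4^(2+n) + 1/4^(2+n) := by ring
  have hDt : |t₁ - t₂| ≤ 1 / 4^(2+n) := by
    rw [abs_sub_le_iff]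
    constructor <;> [skip; skip] <;>
      · have a1 := ht₁.1; have a2 := ht₁.2; have b1 := ht₂.1; have b2 := ht₂.2
        rw [hsplit] at *
        linarith
  have h16 : (16:ℝ) ≤ 4^(2+n) := by
    calc (16:ℝ) = 4^2 := by norm_num
      _ ≤ 4^(2+n) := by
        apply pow_le_pow_right₀ (by norm_num)
        omega
  have hDt' : |t₁ - t₂| ≤ 1/2 := by
    have : 1/(4:ℝ)^(2+n) ≤ 1/16 := by
      apply one_div_le_one_div_of_le (by norm_num) h16
    linarith
  -- orbit control
  have horbit : ∀ (t x : ℝ),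
      x ∈ Set.Icc ((1 + X n (Fm (t:S1)))/2) ((1 + X (n-1) (Fm (t:S1)))/2) →
      ∀ k, 1 ≤ k → k ≤ n →
      ((Tskew α)^[k] ((t:S1), x)).2 ∈
        Set.Icc (X (n-k+1) ((4^k*t : ℝ):S1)) (X (n-k) ((4^k*t : ℝ):S1)) := by
    intro t x hx k
    induction k with
    | zero => omega
    | succ k ih =>
      intro _ hkn
      rcases Nat.eq_zero_or_pos k with hk0 | hk1
      · subst hk0
        have hfm : Fm (t:S1) = ((4^1*t : ℝ):S1) := by
          rw [coe4]; norm_num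
        have hXn : 0 < X n (Fm (t:S1)) := hXpos n hn _
        have hxgt : ¬ x ≤ 1/2 := by
          have := hx.1; push_neg; linarith
        have hval : ((Tskew α)^[0+1] ((t:S1), x)).2 = 2*x - 1 := by
          rw [Tskew_iter_snd]
          simp only [Function.iterate_zero, id_eq]
          exact Ta_right hxgt
        rw [hval, ← hfm]
        have e1 : n - 1 + 1 = n := by omega
        rw [e1]
        refine ⟨?_, ?_⟩
        · have := hx.1; linarith
        · have := hx.2; linarith
      · have hmem := ih hk1 (by omega)
        set m : ℕ := n - k with hmdef
        have hm1 : 1 ≤ m := by omega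
        have hidx : n - k + 1 = m + 1 := rfl
        set ωk : S1 := ((4^k*t : ℝ):S1) with hωk
        have hwrec : ((Tskew α)^[k+1] ((t:S1), x)).2 =
            Ta (α ωk) (((Tskew α)^[k] ((t:S1), x)).2) := by
          rw [Tskew_iter_snd, Tskew_iter_fst, Fm_iter]
        have hub : X m ωk ≤ 1/2 := (hXIcc m hm1 ωk).2
        have hlb0 : (0:ℝ) ≤ X (m+1) ωk := (hXIcc (m+1) (by omega) ωk).1
        have haω : (0:ℝ) ≤ α ωk := (hαpos ωk).le
        have hw1 : X (m+1) ωk ≤ ((Tskew α)^[k] ((t:S1), x)).2 := hmem.1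
        have hw2 : ((Tskew α)^[k] ((t:S1), x)).2 ≤ X m ωk := hmem.2
        have hlow : Ta (α ωk) (X (m+1) ωk) ≤ ((Tskew α)^[k+1] ((t:S1), x)).2 := by
          rw [hwrec]
          exact (Ta_mono haω hlb0 hw1 (le_trans hw2 hub)).1
        have hhigh : ((Tskew α)^[k+1] ((t:S1), x)).2 ≤ Ta (α ωk) (X m ωk) := by
          rw [hwrec]
          exact (Ta_mono haω (le_trans hlb0 hw1) hw2 hub).1
        have hFω : Fm ωk = ((4^(k+1)*t : ℝ):S1) := by
          rw [hωk, coe4]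
          congr 1
          ring
        have hlow' : X m ((4^(k+1)*t : ℝ):S1) ≤ ((Tskew α)^[k+1] ((t:S1), x)).2 := by
          have := hXrec m hm1 ωk
          rw [this, hFω] at hlow
          exact hlow
        have hhigh' : ((Tskew α)^[k+1] ((t:S1), x)).2 ≤ X (m-1) ((4^(k+1)*t : ℝ):S1) := by
          rcases Nat.eq_or_lt_of_le hm1 with h | h
          · -- m = 1
            have hTa1 : Ta (α ωk) (X 1 ωk) = 1 := by
              rw [hX1, Ta_left (by norm_num : (1:ℝ)/2 ≤ 1/2)]
              norm_num
            have e0 : m - 1 = 0 := by omega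
            rw [e0, hX0]
            rw [← h] at hhigh
            rw [hTa1] at hhigh
            exact hhigh
          · -- m ≥ 2
            have hm2 : 2 ≤ m := h
            have := hXrec (m-1) (by omega) ωk
            have e1 : m - 1 + 1 = m := by omega
            rw [e1] at this
            rw [this, hFω] at hhigh
            exact hhigh
        have e2 : n - (k+1) + 1 = m := by omega
        have e3 : n - (k+1) = m - 1 := by omega
        rw [e2, e3]
        exact ⟨hlow', hhigh'⟩
  -- first-step doubling
  have hfirst : ∀ (t x : ℝ),
      x ∈ Set.Icc ((1 + X n (Fm (t:S1)))/2) ((1 + X (n-1) (Fm (t:S1)))/2) →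
      ((Tskew α)^[1] ((t:S1), x)).2 = 2*x - 1 := by
    intro t x hx
    have hXn : 0 < X n (Fm (t:S1)) := hXpos n hn _
    have hxgt : ¬ x ≤ 1/2 := by
      have := hx.1; push_neg; linarith
    rw [show (Tskew α)^[1] = (Tskew α)^[0+1] from rfl, Tskew_iter_snd]
    simp only [Function.iterate_zero, id_eq]
    exact Ta_right hxgt
  -- difference estimate
  have hdiffest : ∀ k, 1 ≤ k → k ≤ n →
      2*|x₁ - x₂| ≤ |((Tskew α)^[k] ((t₁:S1), x₁)).2 - ((Tskew α)^[k] ((t₂:S1), x₂)).2|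
        + L * |t₁ - t₂| * (∑ j ∈ Finset.Ico 1 k, (4:ℝ)^j) := by
    intro k
    induction k with
    | zero => omega
    | succ k ih =>
      intro _ hkn
      rcases Nat.eq_zero_or_pos k with hk0 | hk1
      · subst hk0
        rw [hfirst t₁ x₁ hx₁, hfirst t₂ x₂ hx₂]
        rw [show (2*x₁-1) - (2*x₂-1) = 2*(x₁-x₂) by ring, abs_mul]
        simp only [Finset.Ico_self, Finset.sum_empty, mul_zero, add_zero]
        rw [abs_two]
      · have hI := ih hk1 (by omega)
        have hu := horbit t₁ x₁ hx₁ k hk1 (by omega)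
        have hv := horbit t₂ x₂ hx₂ k hk1 (by omega)
        have hmk : 1 ≤ n - k := by omega
        have hu' : ((Tskew α)^[k] ((t₁:S1), x₁)).2 ∈ Set.Icc (0:ℝ) (1/2) :=
          ⟨le_trans (hXIcc (n-k+1) (by omega) _).1 hu.1,
           le_trans hu.2 (hXIcc (n-k) hmk _).2⟩
        have hv' : ((Tskew α)^[k] ((t₂:S1), x₂)).2 ∈ Set.Icc (0:ℝ) (1/2) :=
          ⟨le_trans (hXIcc (n-k+1) (by omega) _).1 hv.1,
           le_trans hv.2 (hXIcc (n-k) hmk _).2⟩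
        have hrec₁ : ((Tskew α)^[k+1] ((t₁:S1), x₁)).2 =
            Ta (α ((4^k*t₁ : ℝ):S1)) (((Tskew α)^[k] ((t₁:S1), x₁)).2) := by
          rw [Tskew_iter_snd, Tskew_iter_fst, Fm_iter]
        have hrec₂ : ((Tskew α)^[k+1] ((t₂:S1), x₂)).2 =
            Ta (α ((4^k*t₂ : ℝ):S1)) (((Tskew α)^[k] ((t₂:S1), x₂)).2) := by
          rw [Tskew_iter_snd, Tskew_iter_fst, Fm_iter]
        have hstep := Ta_step (hαpos ((4^k*t₁ : ℝ):S1)) (hαpos ((4^k*t₂ : ℝ):S1)) hu' hv'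
        rw [← hrec₁, ← hrec₂] at hstep
        have hαk : |α ((4^k*t₁ : ℝ):S1) - α ((4^k*t₂ : ℝ):S1)| ≤ L * ((4:ℝ)^k * |t₁ - t₂|) := by
          have h := hαcoe (4^k*t₁) (4^k*t₂)
          rw [show (4:ℝ)^k*t₁ - 4^k*t₂ = 4^k*(t₁-t₂) by ring, abs_mul,
            abs_of_nonneg (show (0:ℝ) ≤ 4^k by positivity)] at h
          exact h
        have hsum : (∑ j ∈ Finset.Ico 1 (k+1), (4:ℝ)^j)
            = (∑ j ∈ Finset.Ico 1 k, (4:ℝ)^j) + 4^k := Finset.sum_Ico_succ_top hk1 _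
        rw [hsum]
        have habs : 0 ≤ |t₁ - t₂| := abs_nonneg _
        nlinarith [hI, hstep, hαk, mul_le_mul_of_nonneg_left hαk hL0]
  have hEst := hdiffest n hn le_rfl
  have hsumle : (∑ j ∈ Finset.Ico 1 n, (4:ℝ)^j) ≤ 4^n/3 := by
    have h1 : (∑ j ∈ Finset.Ico 1 n, (4:ℝ)^j) ≤ ∑ j ∈ Finset.range n, (4:ℝ)^j := by
      apply Finset.sum_le_sum_of_subset_of_nonneg
      · intro i hi
        simp only [Finset.mem_Ico] at hi
        simp only [Finset.mem_range]
        omega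
      · intro i _ _
        positivity
    have h2 : (∑ j ∈ Finset.range n, (4:ℝ)^j) = (4^n - 1)/3 := by
      rw [geom_sum_eq (by norm_num : (4:ℝ) ≠ 1)]
      norm_num
    linarith
  have h4n : (4:ℝ) ≤ 4^n := by
    calc (4:ℝ) = 4^1 := by norm_num
      _ ≤ 4^n := by
        apply pow_le_pow_right₀ (by norm_num)
        omega
  -- distances
  have hbase : dist ((Tskew α)^[n] ((t₁:S1), x₁)).1 ((Tskew α)^[n] ((t₂:S1), x₂)).1
      = 4^n * |t₁ - t₂| := by
    rw [Tskew_iter_fst, Tskew_iter_fst, Fm_iter, Fm_iter]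
    rw [dist_coe_S1]
    · rw [show (4:ℝ)^n*t₁ - 4^n*t₂ = 4^n*(t₁-t₂) by ring, abs_mul,
        abs_of_nonneg (show (0:ℝ) ≤ 4^n by positivity)]
    · rw [show (4:ℝ)^n*t₁ - 4^n*t₂ = 4^n*(t₁-t₂) by ring, abs_mul,
        abs_of_nonneg (show (0:ℝ) ≤ 4^n by positivity)]
      have hmul : (4:ℝ)^n * |t₁-t₂| ≤ 4^n * (1/4^(2+n)) :=
        mul_le_mul_of_nonneg_left hDt (by positivity)
      have heq : (4:ℝ)^n * (1/4^(2+n)) = 1/16 := by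
        rw [pow_add]
        field_simp
        ring
      linarith
  have hsmall : dist ((t₁:ℝ):S1) ((t₂:ℝ):S1) = |t₁ - t₂| := dist_coe_S1 t₁ t₂ hDt'
  rw [hbase, hsmall]
  -- final assembly
  set D : ℝ := |t₁ - t₂| with hD
  set Δ : ℝ := |x₁ - x₂| with hΔ
  set W : ℝ := |((Tskew α)^[n] ((t₁:S1), x₁)).2 - ((Tskew α)^[n] ((t₂:S1), x₂)).2| with hW
  set S : ℝ := ∑ j ∈ Finset.Ico 1 n, (4:ℝ)^j with hS
  have hD0 : 0 ≤ D := abs_nonneg _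
  have hW0 : 0 ≤ W := abs_nonneg _
  have hS0 : 0 ≤ S := by
    apply Finset.sum_nonneg
    intro i _
    positivity
  have haL : a * L ≤ 1 := by
    rw [hadef]
    rw [div_mul_eq_mul_div, one_mul, div_le_one (by positivity)]
    linarith
  have A0 : a * (2*Δ) ≤ a * (W + L*D*S) := mul_le_mul_of_nonneg_left hEst ha0.le
  have p2 : a * L * (D * S) ≤ 1 * (D * S) :=
    mul_le_mul_of_nonneg_right haL (by positivity)
  have p3 : D * S ≤ D * (4^n/3) := mul_le_mul_of_nonneg_left hsumle hD0
  have B : 4 * D ≤ 4^n * D := mul_le_mul_of_nonneg_right h4n hD0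
  nlinarith [A0, p2, p3, B]

end
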